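/- arXiv:math/0604280 — 2 statements merged into one kernel-verified Lean document; each statement's English description precedes it below -/
import Mathlib

section
/- For every integer n ≥ 1, the Fibonacci number F_n equals the alternating sum over all integers k of (-1)^k times the binomial coefficient C(n, floor((n-1-5k)/2)). -/
/-- Binomial coefficient `C(m, j)` with integer lower index, zero when `j < 0`. -/
def icho (m : ℕ) (j : ℤ) : ℤ := if 0 ≤ j then (m.choose j.toNat : ℤ) else 0

lemma icho_eq_zero_of_neg {m : ℕ} {j : ℤ} (h : j < 0) : icho m j = 0 := by
  simp [icho, not_le.2 h]

lemma icho_eq_zero_of_gt {m : ℕ} {j : ℤ} (h : (m : ℤ) < j) : icho m j = 0 := by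
  rw [icho, if_pos (by omega)]
  have : m < j.toNat := by omega
  simp [Nat.choose_eq_zero_of_lt this]

lemma icho_pascal (n : ℕ) (j : ℤ) : icho (n+1) j = icho n j + icho n (j-1) := by
  rcases lt_or_ge j 0 with h | h
  · rw [icho_eq_zero_of_neg h, icho_eq_zero_of_neg h, icho_eq_zero_of_neg (by omega)]; ring
  rcases eq_or_lt_of_le h with h0 | h1
  · simp [icho, ← h0]
  · have hj1 : (0:ℤ) ≤ j - 1 := by omega
    rw [icho, icho, icho, if_pos h, if_pos h, if_pos hj1]
    obtain ⟨m, hm⟩ : ∃ m : ℕ, j = (m : ℤ) + 1 := ⟨(j-1).toNat, by omega⟩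
    have h1 : j.toNat = m + 1 := by omega
    have h2 : (j-1).toNat = m := by omega
    rw [h1, h2, Nat.choose_succ_succ']
    push_cast; ring

lemma icho_symm (n : ℕ) (j : ℤ) : icho n j = icho n ((n:ℤ) - j) := by
  rcases lt_or_ge j 0 with h | h
  · rw [icho_eq_zero_of_neg h, icho_eq_zero_of_gt (by omega)]
  rcases le_or_gt j n with h2 | h2
  · rw [icho, icho, if_pos h, if_pos (by omega)]
    have h3 : ((n:ℤ) - j).toNat = n - j.toNat := by omega
    have h4 : j.toNat ≤ n := by omega
    rw [h3, Nat.choose_symm h4]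
  · rw [icho_eq_zero_of_gt h2, icho_eq_zero_of_neg (by omega)]

/-- The summand. -/
def T (n : ℕ) (c : ℤ) (k : ℤ) : ℤ := (-1 : ℤ) ^ k.natAbs * icho n ((c - 5 * k).fdiv 2)

/-- The alternating sum. -/
noncomputable def S (n : ℕ) (c : ℤ) : ℤ := ∑ᶠ k : ℤ, T n c k

lemma fdiv_two (x : ℤ) : x.fdiv 2 = x / 2 := Int.fdiv_eq_ediv_of_nonneg x (by norm_num)

lemma T_support (n : ℕ) (c : ℤ) :
    Function.support (T n c) ⊆ ↑(Finset.Icc (-(|c| + 2*n + 1)) (|c| + 2*n + 1)) := by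
  intro k hk
  simp only [Function.mem_support, T] at hk
  have h1 : icho n ((c - 5*k).fdiv 2) ≠ 0 := by
    intro h; rw [h, mul_zero] at hk; exact hk rfl
  have h2 : 0 ≤ (c - 5*k).fdiv 2 := by
    by_contra h; exact h1 (icho_eq_zero_of_neg (by omega))
  have h3 : (c - 5*k).fdiv 2 ≤ n := by
    by_contra h; exact h1 (icho_eq_zero_of_gt (by omega))
  rw [fdiv_two] at h2 h3
  simp only [Finset.coe_Icc, Set.mem_Icc]
  rcases abs_cases c with ⟨h, _⟩ | ⟨h, _⟩ <;> constructor <;> omega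

lemma T_finite (n : ℕ) (c : ℤ) : (Function.support (T n c)).Finite :=
  Set.Finite.subset (Finset.Icc _ _).finite_toSet (T_support n c)

lemma neg_one_pow_succ (k : ℤ) : (-1 : ℤ) ^ (k+1).natAbs = -(-1 : ℤ) ^ k.natAbs := by
  rcases Int.even_or_odd k with h | h
  · rw [(Int.natAbs_even.2 h).neg_one_pow,
      (Int.natAbs_odd.2 (by exact Even.add_one h)).neg_one_pow]
  · rw [(Int.natAbs_odd.2 h).neg_one_pow,
      (Int.natAbs_even.2 (by exact Odd.add_one h)).neg_one_pow]
    ring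

lemma neg_one_pow_neg (k : ℤ) : (-1 : ℤ) ^ (-k).natAbs = (-1 : ℤ) ^ k.natAbs := by
  rw [Int.natAbs_neg]

/-- Shift: `S n (c+5) = - S n c`. -/
lemma S_shift (n : ℕ) (c : ℤ) : S n (c + 5) = - S n c := by
  have h : ∀ k : ℤ, T n (c+5) ((Equiv.addRight (1:ℤ)) k) = - T n c k := by
    intro k
    simp only [Equiv.coe_addRight, T, neg_one_pow_succ]
    have harg : c + 5 - 5 * (k + 1) = c - 5 * k := by ring
    rw [harg]; ring
  calc S n (c + 5) = ∑ᶠ k : ℤ, T n (c+5) ((Equiv.addRight (1:ℤ)) k) :=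
        (finsum_comp_equiv (Equiv.addRight (1:ℤ))).symm
    _ = ∑ᶠ k : ℤ, - T n c k := finsum_congr h
    _ = - S n c := by rw [S, finsum_neg_distrib]

/-- Reflection: `S n c = S n (2n+1-c)`. -/
lemma S_refl (n : ℕ) (c : ℤ) : S n c = S n (2*(n:ℤ)+1-c) := by
  have : S n (2*(n:ℤ)+1-c) = ∑ᶠ k : ℤ, T n (2*(n:ℤ)+1-c) ((Equiv.neg ℤ) k) :=
    (finsum_comp_equiv (Equiv.neg ℤ)).symm
  rw [S, this]
  apply finsum_congr
  intro k
  simp only [Equiv.neg_apply, T, neg_one_pow_neg]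
  congr 1
  rw [icho_symm n ((c - 5*k).fdiv 2)]
  congr 1
  rw [fdiv_two, fdiv_two]
  omega

/-- Pascal: `S (n+1) c = S n c + S n (c-2)`. -/
lemma S_pascal (n : ℕ) (c : ℤ) : S (n+1) c = S n c + S n (c-2) := by
  rw [S, S, S, ← finsum_add_distrib (T_finite n c) (T_finite n (c-2))]
  apply finsum_congr
  intro k
  simp only [T, icho_pascal]
  have h1 : (c - 5*k).fdiv 2 - 1 = (c - 2 - 5*k).fdiv 2 := by
    rw [fdiv_two, fdiv_two]; omega
  rw [h1]; ring

/-- Vanishing: `S n (n-2) = 0`. -/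
lemma S_vanish (n : ℕ) : S n ((n:ℤ) - 2) = 0 := by
  have h1 : S n ((n:ℤ) - 2) = S n ((n:ℤ) + 3) := by
    have := S_refl n ((n:ℤ) - 2)
    convert this using 2; ring
  have h2 : S n ((n:ℤ) + 3) = - S n ((n:ℤ) - 2) := by
    have := S_shift n ((n:ℤ) - 2)
    convert this using 2; ring
  omega

/-- `S n (n+1) = S n n`. -/
lemma S_np1 (n : ℕ) : S n ((n:ℤ) + 1) = S n (n:ℤ) := by
  have := S_refl n ((n:ℤ) + 1)
  rw [this]; congr 1; ring

lemma sum_eval (n : ℕ) (c : ℤ) :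
    S n c = ∑ k ∈ Finset.Icc (-(|c| + 2*n + 1)) (|c| + 2*n + 1), T n c k :=
  finsum_eq_finset_sum_of_support_subset _ (T_support n c)

lemma S_base_A : S 1 0 = 1 := by
  rw [sum_eval]
  norm_num
  decide

lemma S_base_B : S 1 1 = 1 := by
  rw [sum_eval]
  norm_num
  decide

lemma S_main : ∀ n : ℕ, 1 ≤ n → S n ((n:ℤ) - 1) = Nat.fib n ∧ S n (n:ℤ) = Nat.fib (n+1) := by
  intro n hn
  induction n with
  | zero => omega
  | succ m ih =>
    rcases Nat.eq_or_lt_of_le hn with h1 | h1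
    · have hm : m = 0 := by omega
      subst hm
      exact ⟨by simpa using S_base_A, by simpa using S_base_B⟩
    · have hm : 1 ≤ m := by omega
      obtain ⟨hA, hB⟩ := ih hm
      have e1 : ((m+1 : ℕ) : ℤ) = (m:ℤ) + 1 := by push_cast; ring
      constructor
      · rw [e1, show (m:ℤ) + 1 - 1 = (m:ℤ) + 1 - 1 from rfl,
          show (m:ℤ) + 1 - 1 = (m:ℤ) by ring, S_pascal, S_vanish, hB]
        ring
      · rw [e1, S_pascal, show (m:ℤ) + 1 - 2 = (m:ℤ) - 1 by ring, hA, S_np1, hB,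
          Nat.fib_add_two]
        push_cast; ring

/-- Andrews' identity (2):
`F_n = Σ_{k ∈ ℤ} (-1)^k C(n, ⌊(n-1-5k)/2⌋)` for `n ≥ 1`. -/
theorem andrews_identity_two (n : ℕ) (hn : 1 ≤ n) :
    (Nat.fib n : ℤ) =
      ∑ᶠ k : ℤ, (-1 : ℤ) ^ k.natAbs * icho n (((n : ℤ) - 1 - 5 * k).fdiv 2) := by
  have := (S_main n hn).1
  rw [← this, S]
  apply finsum_congr
  intro k
  simp only [T]
end

section
/- For every natural number n, F_{2n+2} = Σ_{j ∈ ℤ} [ C(2n+2, n-5j) - C(2n+2, n-5j-1) ]. -/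
lemma icho_eq_zero {m : ℕ} {k : ℤ} (h : ¬ (0 ≤ k ∧ k ≤ m)) : icho m k = 0 := by
  unfold icho
  split_ifs with h0
  · have hm : (m:ℤ) < k := by omega
    have : m < k.toNat := by omega
    simp [Nat.choose_eq_zero_of_lt this]
  · rfl

lemma support_finite (m : ℕ) (c : ℤ) :
    (Function.support fun j : ℤ => icho m (c - 5 * j)).Finite := by
  apply Set.Finite.subset (Set.finite_Icc (-(c.natAbs + m) : ℤ) ((c.natAbs + m) : ℤ))
  intro j hj
  simp only [Function.mem_support] at hj
  by_contra hmem
  apply hj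
  apply icho_eq_zero
  simp only [Set.mem_Icc, not_and_or, not_le] at hmem
  omega

/-- Partial sums of binomials in an arithmetic progression mod 5. -/
noncomputable def B (m : ℕ) (c : ℤ) : ℤ := ∑ᶠ j : ℤ, icho m (c - 5 * j)

lemma icho_succ (m : ℕ) (k : ℤ) : icho (m+1) k = icho m k + icho m (k-1) := by
  unfold icho
  split_ifs with h1 h2
  · -- 0 ≤ k, 0 ≤ k - 1
    have hk : k.toNat = (k-1).toNat + 1 := by omega
    rw [hk, Nat.choose_succ_succ']
    push_cast
    ring
  · -- 0 ≤ k, k = 0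
    have : k = 0 := by omega
    subst this
    simp
  · omega
  · simp

lemma B_succ (m : ℕ) (c : ℤ) : B (m+1) c = B m c + B m (c-1) := by
  unfold B
  rw [← finsum_add_distrib (support_finite m c) (support_finite m (c-1))]
  apply finsum_congr
  intro j
  rw [icho_succ]
  congr 1
  ring_nf

lemma icho_zero (k : ℤ) : icho 0 k = if k = 0 then 1 else 0 := by
  unfold icho
  by_cases hk : k = 0
  · subst hk; simp
  · simp only [if_neg hk]
    split_ifs with h0
    · obtain ⟨t, ht⟩ := Nat.exists_eq_succ_of_ne_zero (by omega : k.toNat ≠ 0)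
      rw [ht]
      simp [Nat.choose]
    · rfl

lemma B_zero (c : ℤ) : B 0 c = if (5:ℤ) ∣ c then 1 else 0 := by
  unfold B
  split_ifs with h
  · obtain ⟨j₀, rfl⟩ := h
    rw [finsum_eq_single _ j₀]
    · rw [icho_zero]
      simp
    · intro j hj
      rw [icho_zero]
      have : (5:ℤ) * j₀ - 5 * j ≠ 0 := by
        intro hc; apply hj; omega
      simp [this]
  · have : ∀ j : ℤ, icho 0 (c - 5 * j) = 0 := by
      intro j
      rw [icho_zero]
      have : c - 5 * j ≠ 0 := by
        intro hc; apply h; exact ⟨j, by omega⟩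
      simp [this]
    simp [this]

/-- The closed form of `B m c - B m (c-1)` up to sign, depending on `(2c - m) % 5`. -/
noncomputable def G (m : ℕ) (t : ℤ) : ℤ :=
  if t = 0 then ((Nat.fib (m+1) : ℤ) - Nat.fib m)
  else if t = 1 then 0
  else if t = 2 then -((Nat.fib (m+1) : ℤ) - Nat.fib m)
  else if t = 3 then (Nat.fib m : ℤ)
  else -(Nat.fib m : ℤ)

lemma grand (m : ℕ) : ∀ c : ℤ, B m c - B m (c-1) = (-1)^m * G m ((2*c - m) % 5) := by
  induction m with
  | zero =>
    intro c
    rw [B_zero, B_zero]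
    simp only [G, Nat.cast_zero, pow_zero, one_mul]
    norm_num [Nat.fib_one, Nat.fib_zero]
    split_ifs <;> omega
  | succ m ih =>
    intro c
    rw [B_succ, B_succ]
    have h1 := ih c
    have h2 := ih (c-1)
    have key : B m c - B m (c-1) + (B m (c-1) - B m (c-2)) =
        (-1)^m * G m ((2*c - m) % 5) + (-1)^m * G m ((2*(c-1) - m) % 5) := by
      rw [h1, show (c:ℤ)-2 = c-1-1 by ring, h2]
    have goal' : (-1:ℤ)^m * G m ((2*c - m) % 5) + (-1)^m * G m ((2*(c-1) - m) % 5) =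
        (-1)^(m+1) * G (m+1) ((2*c - (m+1)) % 5) := by
      set u := (2*c - ((m:ℤ)+1)) % 5 with hu
      have hu5 : u = 0 ∨ u = 1 ∨ u = 2 ∨ u = 3 ∨ u = 4 := by omega
      have hfib : (Nat.fib (m+2) : ℤ) = Nat.fib (m+1) + Nat.fib m := by
        rw [Nat.fib_add_two]; push_cast; ring
      rcases hu5 with h | h | h | h | h <;>
      · have e1 : (2*c - (m:ℤ)) % 5 = (u + 1) % 5 := by omega
        have e2 : (2*(c-1) - (m:ℤ)) % 5 = (u + 4) % 5 := by omega
        rw [e1, e2, h]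
        simp only [G]
        norm_num
        push_cast [hfib]
        ring
    have hcast : ((m:ℤ)+1) = ((m+1 : ℕ) : ℤ) := by push_cast; ring
    rw [← hcast] at *
    linarith [key, goal']

/-- Identity (4): `F_{2n+2} = Σ_{j ∈ ℤ} [C(2n+2, n-5j) - C(2n+2, n-5j-1)]`. -/
theorem fib_even_binomial_sum (n : ℕ) :
    (Nat.fib (2 * n + 2) : ℤ) =
      ∑ᶠ j : ℤ, (icho (2 * n + 2) ((n : ℤ) - 5 * j) - icho (2 * n + 2) ((n : ℤ) - 5 * j - 1)) := by
  have step1 : ∑ᶠ j : ℤ, (icho (2 * n + 2) ((n : ℤ) - 5 * j) - icho (2 * n + 2) ((n : ℤ) - 5 * j - 1))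
      = B (2*n+2) n - B (2*n+2) ((n:ℤ) - 1) := by
    unfold B
    rw [← finsum_sub_distrib (support_finite (2*n+2) n) (support_finite (2*n+2) ((n:ℤ)-1))]
    apply finsum_congr
    intro j
    congr 2
    ring
  rw [step1, grand (2*n+2) n]
  have hmod : (2*(n:ℤ) - ((2*n+2 : ℕ) : ℤ)) % 5 = 3 := by push_cast; omega
  rw [hmod]
  have hpow : ((-1:ℤ))^(2*n+2) = 1 := by
    rw [pow_add, pow_mul]
    norm_num
  rw [hpow]
  simp [G]
end
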